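/- Let p = (p_1, ..., p_n) be a probability distribution with all components strictly positive, and for j = 1,...,n let s_j = Σ_{k=1}^{j} p_k (with s_0 = 0). For 1 ≤ i ≤ j ≤ n, define hq[i,j] as the maximum of the entropy-like sum H̃(q) = −Σ_{t=1}^{i} q_t log₂ q_t over all contiguous i-aggregations q = (q_1,...,q_i) of (p_1,...,p_j). Then hq satisfies: hq[1,j] = −s_j·log₂ s_j for all j ≥ 1, and for i > 1 and j ≥ i, hq[i,j] = max_{k = i,...,j} { hq[i−1, k−1] − (s_j − s_{k−1})·log₂(s_j − s_{k−1}) }. -/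

import Mathlib

/-- `q` (given by its first `i` values) is a contiguous `i`-aggregation of the first
`j` values of `p`. -/
def IsContigAgg (j i : ℕ) (p q : ℕ → ℝ) : Prop :=
  ∃ ind : ℕ → ℕ, ind 0 = 0 ∧ ind i = j ∧ (∀ t < i, ind t < ind (t + 1)) ∧
    ∀ t < i, q t = ∑ k ∈ Finset.Ico (ind t) (ind (t + 1)), p k

/-- Entropy-like sum (in bits) of the first `i` components of `w`. -/
noncomputable def shannonHm (i : ℕ) (w : ℕ → ℝ) : ℝ :=
  -∑ t ∈ Finset.range i, w t * Real.logb 2 (w t)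

lemma shannonHm_succ (m : ℕ) (w : ℕ → ℝ) :
    shannonHm (m + 1) w = shannonHm m w - w m * Real.logb 2 (w m) := by
  simp only [shannonHm, Finset.sum_range_succ]; ring

/-- The table `hq[i,j]` of maximum entropy-like sums of contiguous
`i`-aggregations of `(p_1, …, p_j)` satisfies the dynamic-programming recurrence. -/
theorem dp_recurrence
    (n : ℕ) (p : ℕ → ℝ) (hp : ∀ k < n, 0 < p k)
    (hsum : ∑ k ∈ Finset.range n, p k = 1)
    (s : ℕ → ℝ) (hs : ∀ j, s j = ∑ k ∈ Finset.range j, p k)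
    (hq : ℕ → ℕ → ℝ)
    (hhq : ∀ i j, 1 ≤ i → i ≤ j → j ≤ n →
      IsGreatest {x : ℝ | ∃ q : ℕ → ℝ, IsContigAgg j i p q ∧ x = shannonHm i q}
        (hq i j)) :
    (∀ j, 1 ≤ j → j ≤ n → hq 1 j = -(s j * Real.logb 2 (s j))) ∧
    (∀ i j, 1 < i → ∀ (hij : i ≤ j), j ≤ n →
      hq i j = (Finset.Icc i j).sup' (Finset.nonempty_Icc.mpr hij)
        (fun k => hq (i - 1) (k - 1)
          - (s j - s (k - 1)) * Real.logb 2 (s j - s (k - 1)))) := by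
  constructor
  · intro j h1j hjn
    obtain ⟨⟨q, ⟨ind, h0, h1, hmono, hval⟩, hx⟩, -⟩ := hhq 1 j le_rfl h1j hjn
    have hq0 : q 0 = s j := by
      rw [hval 0 one_pos, h0, h1, hs j, Finset.range_eq_Ico]
    rw [hx, shannonHm, Finset.sum_range_one, hq0]
  · intro i j h1i hij hjn
    obtain ⟨m, rfl⟩ : ∃ m, i = m + 1 := ⟨i - 1, (Nat.succ_pred_eq_of_pos (by omega)).symm⟩
    have hm1 : 1 ≤ m := by omega
    apply le_antisymm
    · obtain ⟨⟨q, ⟨ind, h0, hI, hmono, hval⟩, hx⟩, -⟩ := hhq (m + 1) j (by omega) hij hjn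
      have hge : ∀ t, t ≤ m + 1 → t ≤ ind t := by
        intro t
        induction t with
        | zero => intro _; omega
        | succ t ih =>
          intro ht
          have h1 := hmono t (by omega)
          have h2 := ih (by omega)
          omega
      have hlt : ind m < j := by
        have := hmono m (by omega); omega
      have hKmem : ind m + 1 ∈ Finset.Icc (m + 1) j := by
        have := hge m (by omega)
        simp only [Finset.mem_Icc]; omega
      have hagg : IsContigAgg (ind m) m p q :=
        ⟨ind, h0, rfl, fun t ht => hmono t (by omega), fun t ht => hval t (by omega)⟩
      have hle := (hhq m (ind m) hm1 (hge m (by omega)) (by omega)).2 ⟨q, hagg, rfl⟩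
      have hqm : q m = s j - s (ind m) := by
        rw [hval m (by omega), hI, hs, hs, Finset.sum_Ico_eq_sub _ (le_of_lt hlt)]
      have hfin := Finset.le_sup'
        (f := fun k => hq (m + 1 - 1) (k - 1)
          - (s j - s (k - 1)) * Real.logb 2 (s j - s (k - 1))) hKmem
      simp only [Nat.add_sub_cancel] at hfin
      calc hq (m + 1) j
          = shannonHm m q - (s j - s (ind m)) * Real.logb 2 (s j - s (ind m)) := by
            rw [hx, shannonHm_succ, hqm]
        _ ≤ hq m (ind m) - (s j - s (ind m)) * Real.logb 2 (s j - s (ind m)) := by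
            linarith
        _ ≤ _ := hfin
    · apply Finset.sup'_le
      intro k hk
      simp only [Finset.mem_Icc] at hk
      obtain ⟨⟨q', ⟨ind', h0', hI', hmono', hval'⟩, hx'⟩, -⟩ :=
        hhq m (k - 1) hm1 (by omega) (by omega)
      set q : ℕ → ℝ := fun t => if t < m then q' t else s j - s (k - 1) with hqdef
      set ind : ℕ → ℕ := fun t => if t < m + 1 then ind' t else j with hinddef
      have hk1j : k - 1 < j := by omega
      have hagg : IsContigAgg j (m + 1) p q := by
        refine ⟨ind, by simp [hinddef, h0'], by simp [hinddef], ?_, ?_⟩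
        · intro t ht
          rcases lt_or_eq_of_le (Nat.lt_succ_iff.mp ht) with h | h
          · have : ind t = ind' t := by simp [hinddef]; omega
            have h2 : ind (t + 1) = ind' (t + 1) := by simp [hinddef]; omega
            rw [this, h2]; exact hmono' t h
          · rw [h]
            have e1 : ind m = ind' m := by simp [hinddef]
            have e2 : ind (m + 1) = j := by simp [hinddef]
            rw [e1, e2, hI']; exact hk1j
        · intro t ht
          rcases lt_or_eq_of_le (Nat.lt_succ_iff.mp ht) with h | h
          · have e1 : ind t = ind' t := by simp [hinddef]; omega
            have e2 : ind (t + 1) = ind' (t + 1) := by simp [hinddef]; omega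
            have e3 : q t = q' t := by simp [hqdef, h]
            rw [e1, e2, e3]; exact hval' t h
          · rw [h]
            have e1 : ind m = ind' m := by simp [hinddef]
            have e2 : ind (m + 1) = j := by simp [hinddef]
            have e3 : q m = s j - s (k - 1) := by simp [hqdef]
            rw [e1, e2, e3, hI', hs, hs, Finset.sum_Ico_eq_sub _ (le_of_lt hk1j)]
      have hle := (hhq (m + 1) j (by omega) hij hjn).2 ⟨q, hagg, rfl⟩
      have hsm : shannonHm m q = shannonHm m q' := by
        unfold shannonHm
        congr 1
        apply Finset.sum_congr rfl
        intro t ht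
        simp only [Finset.mem_range] at ht
        simp [hqdef, ht]
      have hqm : q m = s j - s (k - 1) := by simp [hqdef]
      have : shannonHm (m + 1) q
          = hq m (k - 1) - (s j - s (k - 1)) * Real.logb 2 (s j - s (k - 1)) := by
        rw [shannonHm_succ, hsm, hqm, hx']
      simp only [Nat.add_sub_cancel]
      linarith
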